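/- If μ ≥ r > 0, then H attains a strict global minimum at κ+c with H(κ+c) = 0, so H(z) > 0 for all z ∈ (0,∞) with z ≠ κ+c; in particular κ+c is the unique root of H. -/

import Mathlib

open Real Set


noncomputable def Kf (p q A B b : ℝ) : ℝ → ℝ := fun z =>
  A * (1 - q) * b ^ p * z ^ (1 - p) - A * (1 - p) * b ^ q * z ^ (1 - q)
    + B * q * b ^ p * z ^ (-p) - B * p * b ^ q * z ^ (-q)

lemma Kf_hasDerivAt (p q A B b z : ℝ) (hb : 0 < b) (hz : 0 < z) :
    HasDerivAt (Kf p q A B b)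
      (((b / z) ^ p - (b / z) ^ q) * (A * ((1 - p) * (1 - q)) - B * (p * q) / z)) z := by
  have h1 : HasDerivAt (fun y : ℝ => y ^ (1 - p)) ((1 - p) * z ^ (-p)) z := by
    simpa [show (1 : ℝ) - p - 1 = -p by ring]
      using Real.hasDerivAt_rpow_const (p := 1 - p) (Or.inl hz.ne')
  have h2 : HasDerivAt (fun y : ℝ => y ^ (1 - q)) ((1 - q) * z ^ (-q)) z := by
    simpa [show (1 : ℝ) - q - 1 = -q by ring]
      using Real.hasDerivAt_rpow_const (p := 1 - q) (Or.inl hz.ne')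
  have h3 : HasDerivAt (fun y : ℝ => y ^ (-p)) ((-p) * z ^ (-p - 1)) z :=
    Real.hasDerivAt_rpow_const (p := -p) (Or.inl hz.ne')
  have h4 : HasDerivAt (fun y : ℝ => y ^ (-q)) ((-q) * z ^ (-q - 1)) z :=
    Real.hasDerivAt_rpow_const (p := -q) (Or.inl hz.ne')
  have htot := (((h1.const_mul (A * (1 - q) * b ^ p)).sub
      (h2.const_mul (A * (1 - p) * b ^ q))).add
      (h3.const_mul (B * q * b ^ p))).sub (h4.const_mul (B * p * b ^ q))
  refine htot.congr_deriv ?_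
  symm
  have hzp : (0 : ℝ) < z ^ p := Real.rpow_pos_of_pos hz p
  have hzq : (0 : ℝ) < z ^ q := Real.rpow_pos_of_pos hz q
  rw [Real.rpow_sub hz (-p) 1, Real.rpow_sub hz (-q) 1, Real.rpow_one,
    Real.div_rpow hb.le hz.le, Real.div_rpow hb.le hz.le,
    Real.rpow_neg hz.le p, Real.rpow_neg hz.le q]
  field_simp
  ring

lemma Kf_min (p q A B b : ℝ) (hb : 0 < b) (hpq : p < q)
    (h1 : 0 ≤ A * ((1 - p) * (1 - q))) (h2 : B * (p * q) < 0) :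
    ∀ z, 0 < z → z ≠ b → Kf p q A B b b < Kf p q A B b z := by
  have hfac2 : ∀ z : ℝ, 0 < z → 0 < A * ((1 - p) * (1 - q)) - B * (p * q) / z := by
    intro z hz
    have : B * (p * q) / z < 0 := div_neg_of_neg_of_pos h2 hz
    linarith
  have hanti : StrictAntiOn (Kf p q A B b) (Ioc 0 b) := by
    apply strictAntiOn_of_deriv_neg (convex_Ioc 0 b)
    · exact fun z hz => (Kf_hasDerivAt p q A B b z hb hz.1).continuousAt.continuousWithinAt
    · intro z hz
      rw [interior_Ioc] at hz
      rw [(Kf_hasDerivAt p q A B b z hb hz.1).deriv]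
      apply mul_neg_of_neg_of_pos _ (hfac2 z hz.1)
      have h1lt : 1 < b / z := (one_lt_div hz.1).mpr hz.2
      have := (Real.rpow_lt_rpow_left_iff h1lt).mpr hpq
      linarith
  have hmono : StrictMonoOn (Kf p q A B b) (Ici b) := by
    apply strictMonoOn_of_deriv_pos (convex_Ici b)
    · exact fun z hz =>
        (Kf_hasDerivAt p q A B b z hb (hb.trans_le hz)).continuousAt.continuousWithinAt
    · intro z hz
      rw [interior_Ici] at hz
      have hz0 : 0 < z := hb.trans hz
      rw [(Kf_hasDerivAt p q A B b z hb hz0).deriv]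
      apply mul_pos _ (hfac2 z hz0)
      have hlt1 : b / z < 1 := (div_lt_one hz0).mpr hz
      have h0 : 0 < b / z := div_pos hb hz0
      have := (Real.rpow_lt_rpow_left_iff_of_base_lt_one h0 hlt1).mpr hpq
      linarith
  intro z hz hne
  rcases lt_or_gt_of_ne hne with h | h
  · exact hanti ⟨hz, h.le⟩ ⟨hb, le_refl b⟩ h
  · exact hmono (self_mem_Ici) h.le h

lemma Kf_at_b (p q A B b : ℝ) (hb : 0 < b) :
    Kf p q A B b b = A * b * (p - q) + B * (q - p) := by
  have hbp : (0 : ℝ) < b ^ p := Real.rpow_pos_of_pos hb p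
  have hbq : (0 : ℝ) < b ^ q := Real.rpow_pos_of_pos hb q
  unfold Kf
  rw [show (1 : ℝ) - p = 1 + -p by ring, show (1 : ℝ) - q = 1 + -q by ring,
    Real.rpow_add hb, Real.rpow_add hb, Real.rpow_one,
    Real.rpow_neg hb.le p, Real.rpow_neg hb.le q]
  field_simp
  ring

theorem stmt_10 (μ σ r lam κ c : ℝ) (hσ : 0 < σ) (hlam : 0 < lam) (hκ : 0 < κ) (hc : 0 ≤ c)
    (hlr : max μ 0 < lam + r)
    (ν : ℝ) (hν : ν = μ / σ ^ 2 - 1 / 2)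
    (φ ψ F G s' H : ℝ → ℝ) (w : ℝ)
    (hφ : ∀ x : ℝ, φ x = x ^ (-Real.sqrt (ν ^ 2 + 2 * (lam + r) / σ ^ 2) - ν))
    (hψ : ∀ x : ℝ, ψ x = x ^ (Real.sqrt (ν ^ 2 + 2 * (lam + r) / σ ^ 2) - ν))
    (hF : ∀ z : ℝ, F z = ((r - μ) / (lam + r - μ)) * z - r * κ / (lam + r))
    (hG : ∀ z : ℝ, G z = φ (κ + c) * ψ z - φ z * ψ (κ + c))
    (hw : w = 2 * Real.sqrt (ν ^ 2 + 2 * (lam + r) / σ ^ 2))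
    (hs : ∀ z : ℝ, s' z = z ^ (-2 * ν - 1))
    (hH : ∀ z : ℝ, H z = (deriv F z * G z - F z * deriv G z) / (w * s' z) + F (κ + c))
    (hr : 0 < r) (hμ : r ≤ μ) :
    H (κ + c) = 0 ∧
    ∀ z ∈ Set.Ioi (0 : ℝ), z ≠ κ + c → 0 < H z := by
  have hlr' : μ < lam + r := lt_of_le_of_lt (le_max_left _ _) hlr
  have hlr0 : 0 < lam + r := lt_of_le_of_lt (le_max_right _ _) hlr
  have hσ2 : (0 : ℝ) < σ ^ 2 := by positivity
  have hμ0 : 0 < μ := lt_of_lt_of_le hr hμ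
  set a := Real.sqrt (ν ^ 2 + 2 * (lam + r) / σ ^ 2) with ha_def
  set b := κ + c with hb_def
  set p := -a - ν with hp_def
  set q := a - ν with hq_def
  set A := (r - μ) / (lam + r - μ) with hA_def
  set B := r * κ / (lam + r) with hB_def
  have hb : 0 < b := by rw [hb_def]; linarith
  have harg : (0 : ℝ) < ν ^ 2 + 2 * (lam + r) / σ ^ 2 := by positivity
  have ha : 0 < a := Real.sqrt_pos.mpr harg
  have ha2 : a ^ 2 = ν ^ 2 + 2 * (lam + r) / σ ^ 2 := Real.sq_sqrt harg.le
  have hqp : q - p = 2 * a := by rw [hp_def, hq_def]; ring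
  have hplq : p < q := by rw [hp_def, hq_def]; linarith
  -- sign facts
  have hAle : A ≤ 0 := div_nonpos_of_nonpos_of_nonneg (by linarith) (by linarith)
  have hBpos : 0 < B := by rw [hB_def]; positivity
  have hfacval : (1 - p) * (1 - q) = 1 + 2 * ν - 2 * (lam + r) / σ ^ 2 := by
    rw [hp_def, hq_def]; linear_combination -ha2
  have hfacneg : (1 - p) * (1 - q) < 0 := by
    rw [hfacval, hν]
    have h := (div_lt_div_iff_of_pos_right hσ2).mpr hlr'
    ring_nf
    ring_nf at h
    linarith
  have h1 : 0 ≤ A * ((1 - p) * (1 - q)) := mul_nonneg_of_nonpos_of_nonpos hAle hfacneg.le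
  have hpqval : p * q = ν ^ 2 - a ^ 2 := by rw [hp_def, hq_def]; ring
  have hpqneg : p * q < 0 := by
    rw [hpqval, ha2]
    have : (0 : ℝ) < 2 * (lam + r) / σ ^ 2 := by positivity
    linarith
  have h2 : B * (p * q) < 0 := mul_neg_of_pos_of_neg hBpos hpqneg
  -- derivatives of F and G
  have hF' : F = fun z => A * z - B := funext fun z => hF z
  have hFd : ∀ z : ℝ, deriv F z = A := by
    intro z
    rw [hF']
    simpa using (((hasDerivAt_id z).const_mul A).sub_const B).deriv
  have hG' : G = fun z => b ^ p * z ^ q - z ^ p * b ^ q := funext fun x => by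
    rw [hG, hφ, hψ, hφ, hψ]
  have hGd : ∀ z : ℝ, 0 < z →
      deriv G z = b ^ p * (q * z ^ (q - 1)) - p * z ^ (p - 1) * b ^ q := by
    intro z hz
    rw [hG']
    exact (((Real.hasDerivAt_rpow_const (p := q) (Or.inl hz.ne')).const_mul
      (b ^ p)).sub ((Real.hasDerivAt_rpow_const (p := p) (Or.inl hz.ne')).mul_const
      (b ^ q))).deriv
  -- H equals Kf-based expression on (0, ∞)
  have hkey : ∀ z : ℝ, 0 < z → H z = Kf p q A B b z / (2 * a) + (A * b - B) := by
    intro z hz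
    have hzp : (0 : ℝ) < z ^ p := Real.rpow_pos_of_pos hz p
    have hzq : (0 : ℝ) < z ^ q := Real.rpow_pos_of_pos hz q
    rw [hH, hFd, hGd z hz, hG', hF, hF, hs, hw]
    show (A * (b ^ p * z ^ q - z ^ p * b ^ q) -
      (A * z - B) * (b ^ p * (q * z ^ (q - 1)) - p * z ^ (p - 1) * b ^ q)) /
        (2 * a * z ^ (-2 * ν - 1)) + (A * b - B) = _
    rw [show (-2 * ν - 1 : ℝ) = p + q - 1 by rw [hp_def, hq_def]; ring,
      Real.rpow_sub hz (p + q) 1, Real.rpow_add hz p q, Real.rpow_one,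
      Real.rpow_sub hz q 1, Real.rpow_sub hz p 1, Real.rpow_one]
    unfold Kf
    rw [show (1 : ℝ) - p = 1 + -p by ring, show (1 : ℝ) - q = 1 + -q by ring,
      Real.rpow_add hz, Real.rpow_add hz, Real.rpow_one,
      Real.rpow_neg hz.le p, Real.rpow_neg hz.le q]
    field_simp
    ring
  have hKb : Kf p q A B b b / (2 * a) + (A * b - B) = 0 := by
    rw [Kf_at_b p q A B b hb, show p - q = -(q - p) by ring, hqp]
    field_simp
    ring
  constructor
  · rw [hkey b hb, hKb]
  · intro z hz hne
    rw [mem_Ioi] at hz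
    have hlt := Kf_min p q A B b hb hplq h1 h2 z hz hne
    have hdiv : 0 < (Kf p q A B b z - Kf p q A B b b) / (2 * a) :=
      div_pos (sub_pos.mpr hlt) (by linarith)
    have hsub : (Kf p q A B b z - Kf p q A B b b) / (2 * a)
        = Kf p q A B b z / (2 * a) - Kf p q A B b b / (2 * a) := sub_div _ _ _
    rw [hkey z hz]
    linarith
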